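/- Let a > 3 be an integer, let b = ⌈a/3⌉, and let χ be a Dirichlet character modulo 2^a. Then there exists an integer L₁, depending only on χ and b (independent of x), such that for every integer x, χ(1 + 2^b x) = exp(2πi · L₁ · (2^b x − 2^{2b−1} x²) / 2^a) (equivalently, χ(1 + 2^b x) = exp(2πi L₁ x / 2^{a−b} − πi L₁ x² / 2^{a−2b})). -/

import Mathlib

open Complex in
lemma unit_aux (m : ℕ) (w : ZMod (2^m)) : IsUnit (1 - 2*w) := by
  refine IsUnit.of_mul_eq_one (∑ i ∈ Finset.range m, (2*w)^i) ?_
  have h := geom_sum_mul (2*w) m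
  have hz : (2*w)^m = 0 := by
    rw [mul_pow, show ((2:ZMod (2^m)))= ((2:ℕ):ZMod (2^m)) by norm_cast, ← Nat.cast_pow,
      ZMod.natCast_self, zero_mul]
  rw [hz] at h
  linear_combination -h

/-- **Postnikov character formula, `p = 2`, `a > 3` case.**
Let `a > 3`, `b = ⌈a/3⌉`, and `χ` a Dirichlet character mod `2^a`. Then there is an
integer `L₁` (independent of `x`) such that for all integers `x`,
`χ(1 + 2^b x) = exp(2πi · L₁ · (2^b x − 2^{2b−1} x²) / 2^a)`. -/
theorem stmt1 (a : ℕ) (ha : 3 < a) (b : ℕ) (hb : (b : ℤ) = ⌈(a : ℚ) / 3⌉)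
    (χ : DirichletCharacter ℂ (2 ^ a)) :
    ∃ L₁ : ℤ, ∀ x : ℤ,
      χ ((1 + 2 ^ b * x : ℤ) : ZMod (2 ^ a)) =
        Complex.exp (2 * (Real.pi : ℂ) * Complex.I * (L₁ : ℂ) *
          ((2 : ℂ) ^ b * (x : ℂ) - (2 : ℂ) ^ (2 * b - 1) * (x : ℂ) ^ 2) / (2 : ℂ) ^ a) := by
  have haq : (4:ℚ) ≤ a := by exact_mod_cast ha
  have h1 : (a : ℤ) ≤ 3 * b := by
    rw [hb]
    have h := Int.le_ceil ((a:ℚ)/3)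
    have : (a : ℚ) ≤ 3 * (⌈(a:ℚ)/3⌉ : ℤ) := by
      rw [div_le_iff₀ (by norm_num)] at h; linarith
    exact_mod_cast this
  have h2 : (2:ℤ) ≤ b := by
    rw [hb, Int.le_ceil_iff]
    rw [lt_div_iff₀ (by norm_num)]; push_cast; linarith
  have h3 : (b:ℤ) ≤ (a:ℤ) - 1 := by
    rw [hb, Int.ceil_le, div_le_iff₀ (by norm_num)]; push_cast; linarith
  have hb2 : 2 ≤ b := by omega
  have hba : b < a := by omega
  have h3b : a ≤ 3 * b := by omega
  clear haq h1 h2 h3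
  set m := a - b with hm
  haveI : NeZero (2^m) := ⟨pow_ne_zero _ two_ne_zero⟩
  set S : ℤ → ℤ := fun x => x - 2^(b-1) * x^2 with hS
  set sbar : ZMod (2^m) → ZMod (2^m) := fun t => t - 2^(b-1) * t^2 with hsbar
  have hcastS : ∀ x : ℤ, ((S x : ℤ) : ZMod (2^m)) = sbar ((x : ZMod (2^m))) := by
    intro x; simp only [hS, hsbar]; push_cast; ring
  have hinj : Function.Injective sbar := by
    intro u v huv
    simp only [hsbar] at huv
    have h0 : (u - v) * (1 - 2 * (2^(b-2) * (u + v))) = 0 := by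
      have hpow : (2:ZMod (2^m))^(b-1) = 2 * 2^(b-2) := by
        rw [← pow_succ']; congr 1; omega
      rw [hpow] at huv
      linear_combination huv
    have hu := unit_aux m (2^(b-2) * (u + v))
    exact sub_eq_zero.mp (hu.mul_left_eq_zero.mp h0)
  have hbij : Function.Bijective sbar := Finite.injective_iff_bijective.mp hinj
  set sinv := Function.invFun sbar with hsinv
  have hleft : ∀ t, sinv (sbar t) = t := fun t => Function.leftInverse_invFun hinj t
  set F : ZMod (2^m) → ℂ := fun t => χ ((1 + 2^b * (t.val : ℤ) : ℤ) : ZMod (2^a)) with hF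
  have hFx : ∀ x : ℤ, χ ((1 + 2 ^ b * x : ℤ) : ZMod (2 ^ a)) = F ((x : ZMod (2^m))) := by
    intro x
    simp only [hF]
    congr 1
    have hv : (((x : ZMod (2^m)).val : ℤ) : ZMod (2^m)) = (x : ZMod (2^m)) := by
      simp [ZMod.natCast_val, ZMod.cast_id]
    have hdvd : (((2^m : ℕ)) :ℤ) ∣ (x - ((x : ZMod (2^m)).val : ℤ)) := by
      refine (ZMod.intCast_zmod_eq_zero_iff_dvd _ _).mp ?_
      push_cast [hv]
      ring
    obtain ⟨k, hk⟩ := hdvd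
    push_cast at hk
    rw [ZMod.intCast_eq_intCast_iff, Int.modEq_iff_dvd]
    have e : (2:ℤ)^a = 2^b * 2^m := by rw [← pow_add]; congr 1; omega
    refine ⟨-k, ?_⟩
    push_cast
    rw [e]
    linear_combination (-(2:ℤ)^b) * hk
  have key : ∀ x y : ℤ, ((2:ℤ)^m) ∣ S (x + y + 2^b*x*y) - S x - S y := by
    intro x y
    refine ⟨-(2^(2*b-m)*(x*y)*(x+y) + 2^(3*b-1-m)*(x*y)^2), ?_⟩
    have hA : (2:ℤ)^m * 2^(2*b-m) = 2^(b-1)*2^(b-1)*4 := by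
      rw [← pow_add, show m+(2*b-m) = (b-1)+((b-1)+2) by omega, pow_add, pow_add]; ring
    have hB : (2:ℤ)^m * 2^(3*b-1-m) = 2^(b-1)*2^(b-1)*2^(b-1)*4 := by
      rw [← pow_add, show m+(3*b-1-m) = (b-1)+((b-1)+((b-1)+2)) by omega, pow_add, pow_add,
        pow_add]; ring
    have hE : (2:ℤ)^b = 2^(b-1)*2 := by rw [← pow_succ]; congr 1; omega
    simp only [hS]
    rw [hE]
    linear_combination (x*y*(x+y))*hA + ((x*y)^2)*hB
  have hs : ∀ x y : ℤ, sbar ((x + y + 2^b*x*y : ℤ) : ZMod (2^m))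
      = sbar (x : ZMod (2^m)) + sbar (y : ZMod (2^m)) := by
    intro x y
    rw [← hcastS, ← hcastS, ← hcastS]
    have h0 : ((S (x+y+2^b*x*y) - S x - S y : ℤ) : ZMod (2^m)) = 0 := by
      refine (ZMod.intCast_zmod_eq_zero_iff_dvd _ _).mpr ?_
      exact_mod_cast key x y
    push_cast at h0
    linear_combination h0
  have hmul : ∀ x y : ℤ, χ ((1 + 2^b*x : ℤ) : ZMod (2^a)) * χ ((1 + 2^b*y : ℤ) : ZMod (2^a))
      = χ ((1 + 2^b*(x + y + 2^b*x*y) : ℤ) : ZMod (2^a)) := by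
    intro x y
    rw [← map_mul]
    congr 1
    push_cast
    ring
  set c : ZMod (2^m) → ℂ := fun t => F (sinv t) with hc
  have hcF : ∀ x : ℤ, c (sbar (x : ZMod (2^m))) = F (x : ZMod (2^m)) := by
    intro x; simp only [hc]; rw [hleft]
  have hadd : ∀ u v : ZMod (2^m), c (u + v) = c u * c v := by
    intro u v
    obtain ⟨tu, htu⟩ := hbij.surjective u
    obtain ⟨tv, htv⟩ := hbij.surjective v
    have hxu : ((tu.val : ℤ) : ZMod (2^m)) = tu := by simp [ZMod.natCast_val, ZMod.cast_id]
    have hyv : ((tv.val : ℤ) : ZMod (2^m)) = tv := by simp [ZMod.natCast_val, ZMod.cast_id]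
    rw [← htu, ← htv, ← hxu, ← hyv, ← hs, hcF, hcF, hcF, ← hFx, ← hFx, ← hFx, hmul]
  have hsbar0 : sbar 0 = 0 := by simp [hsbar]
  have hc0 : c 0 = 1 := by
    have h1 : sinv 0 = 0 := by conv_lhs => rw [← hsbar0, hleft]
    simp only [hc, h1, hF]
    simp [ZMod.val_zero]
  have hpow : ∀ n : ℕ, c ((n : ZMod (2^m))) = (c 1)^n := by
    intro n
    induction n with
    | zero => simpa using hc0
    | succ n ih => push_cast; rw [hadd, ih, pow_succ]
  have hzeta : (c 1)^(2^m) = 1 := by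
    have h := hpow (2^m)
    rw [ZMod.natCast_self, hc0] at h
    exact h.symm
  have h2m0 : (2^m : ℕ) ≠ 0 := NeZero.ne _
  obtain ⟨i, hilt, hi⟩ := (Complex.isPrimitiveRoot_exp (2^m) h2m0).eq_pow_of_pow_eq_one hzeta
  refine ⟨(i : ℤ), fun x => ?_⟩
  set v : ℕ := (sbar (x : ZMod (2^m))).val with hv
  have h1 : χ ((1 + 2 ^ b * x : ℤ) : ZMod (2 ^ a)) = (c 1)^v := by
    rw [hFx, ← hcF, ← hpow]
    congr 1
    simp [hv, ZMod.natCast_val, ZMod.cast_id]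
  have h2 : ((2:ℤ)^m) ∣ ((v:ℤ) - S x) := by
    have h0 : (((v:ℤ) - S x : ℤ) : ZMod (2^m)) = 0 := by
      push_cast [hcastS]
      simp [hv, ZMod.natCast_val, ZMod.cast_id]
    exact_mod_cast (ZMod.intCast_zmod_eq_zero_iff_dvd _ _).mp h0
  obtain ⟨k, hk⟩ := h2
  have hSc : ((S x : ℤ):ℂ) = (x:ℂ) - 2^(b-1)*(x:ℂ)^2 := by simp only [hS]; push_cast; ring
  have hva : ((v:ℕ):ℂ) = ((x:ℂ) - 2^(b-1)*(x:ℂ)^2) + 2^m*(k:ℂ) := by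
    have h' : (v:ℤ) = S x + 2^m*k := by linarith
    have h'' := congrArg (fun z : ℤ => (z:ℂ)) h'
    push_cast at h''
    rw [hSc] at h''
    push_cast at h''
    exact h''
  have e2a : (2:ℂ)^a = 2^b * 2^m := by rw [← pow_add]; congr 1; omega
  have e2b : (2:ℂ)^(2*b-1) = 2^b * 2^(b-1) := by rw [← pow_add]; congr 1; omega
  have hm0 : (2:ℂ)^m ≠ 0 := pow_ne_zero _ two_ne_zero
  have hb0 : (2:ℂ)^b ≠ 0 := pow_ne_zero _ two_ne_zero
  rw [h1, ← hi, ← pow_mul, ← Complex.exp_nat_mul]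
  have harg : ((i*v : ℕ):ℂ) * (2*(Real.pi:ℂ)*Complex.I/(((2^m : ℕ)):ℂ))
      = 2 * (Real.pi : ℂ) * Complex.I * (((i:ℤ)):ℂ) *
          ((2 : ℂ) ^ b * (x : ℂ) - (2 : ℂ) ^ (2 * b - 1) * (x : ℂ) ^ 2) / (2 : ℂ) ^ a
        + (((i*k : ℤ)):ℂ) * (2*(Real.pi:ℂ)*Complex.I) := by
    push_cast
    rw [hva, e2a, e2b]
    field_simp
  rw [harg, Complex.exp_add, Complex.exp_int_mul_two_pi_mul_I, mul_one]
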